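/- Let W_ε : ℝ³ → ℝ be continuous, u∞ = [U_ε - W_ε]_+ with U_ε ∈ ℝ chosen so that ∫u∞ dx = 1, and let u : ℝ³ → [0,∞) be any probability density in L²(ℝ³). Then ∫_{ℝ³} (W_ε + u∞)(u - u∞) dx ≥ 0, and consequently L_u(u) := ∫(½(u² - u∞²) + W_ε(u - u∞)) dx ≥ ½‖u - u∞‖²_{L²(ℝ³)}. -/

import Mathlib

open MeasureTheory

theorem stmt17 (Weps : EuclideanSpace ℝ (Fin 3) → ℝ) (hWcont : Continuous Weps)
    (Ueps : ℝ)
    (u_inf : EuclideanSpace ℝ (Fin 3) → ℝ)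
    (hu_inf_def : ∀ x, u_inf x = max (Ueps - Weps x) 0)
    (hu_inf_int : Integrable u_inf volume)
    (hu_inf_mass : (∫ x, u_inf x) = 1)
    (hu_inf2 : MemLp u_inf 2 volume)
    (u : EuclideanSpace ℝ (Fin 3) → ℝ)
    (hu : ∀ x, 0 ≤ u x) (huint : Integrable u volume)
    (humass : (∫ x, u x) = 1) (hu2 : MemLp u 2 volume)
    (hWu : Integrable (fun x => Weps x * u x) volume)
    (hWu_inf : Integrable (fun x => Weps x * u_inf x) volume) :
    (0 ≤ ∫ x, (Weps x + u_inf x) * (u x - u_inf x)) ∧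
      (1 / 2) * (∫ x, (u x - u_inf x) ^ 2) ≤
        ∫ x, ((1 / 2) * ((u x) ^ 2 - (u_inf x) ^ 2) + Weps x * (u x - u_inf x)) := by
  -- integrability of squares and product
  have hsq_u : Integrable (fun x => u x ^ 2) volume := hu2.integrable_sq
  have hsq_ui : Integrable (fun x => u_inf x ^ 2) volume := hu_inf2.integrable_sq
  have hsq_sum : Integrable (fun x => (u x + u_inf x) ^ 2) volume := by
    simpa using (hu2.add hu_inf2).integrable_sq
  have hprod : Integrable (fun x => u_inf x * u x) volume := by
    have h := ((hsq_sum.sub hsq_u).sub hsq_ui).const_mul (1 / 2 : ℝ)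
    exact h.congr (Filter.Eventually.of_forall fun x => by simp only [Pi.sub_apply, Pi.add_apply]; ring)
  have hg : Integrable (fun x => (Weps x + u_inf x) * (u x - u_inf x)) volume := by
    have h := (hWu.sub hWu_inf).add (hprod.sub hsq_ui)
    exact h.congr (Filter.Eventually.of_forall fun x => by simp only [Pi.sub_apply, Pi.add_apply]; ring)
  have hlin : Integrable (fun x => Ueps * (u x - u_inf x)) volume :=
    (huint.sub hu_inf_int).const_mul Ueps
  -- pointwise bound
  have key : ∀ x, Ueps * (u x - u_inf x) ≤ (Weps x + u_inf x) * (u x - u_inf x) := by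
    intro x
    rcases le_total (Ueps - Weps x) 0 with h | h
    · have h0 : u_inf x = 0 := by rw [hu_inf_def x, max_eq_right h]
      rw [h0]
      have := hu x
      nlinarith
    · have h0 : u_inf x = Ueps - Weps x := by rw [hu_inf_def x, max_eq_left h]
      rw [h0]; exact le_of_eq (by ring)
  have h1 : (0 : ℝ) ≤ ∫ x, (Weps x + u_inf x) * (u x - u_inf x) := by
    have hz : (∫ x, Ueps * (u x - u_inf x)) = 0 := by
      rw [integral_const_mul, integral_sub huint hu_inf_int, humass, hu_inf_mass]; ring
    calc (0 : ℝ) = ∫ x, Ueps * (u x - u_inf x) := hz.symm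
      _ ≤ _ := integral_mono hlin hg key
  refine ⟨h1, ?_⟩
  have hsqd : Integrable (fun x => (u x - u_inf x) ^ 2) volume := (hu2.sub hu_inf2).integrable_sq
  have hre : (∫ x, ((1 / 2) * ((u x) ^ 2 - (u_inf x) ^ 2) + Weps x * (u x - u_inf x)))
      = (∫ x, ((1 / 2) * (u x - u_inf x) ^ 2 + (Weps x + u_inf x) * (u x - u_inf x))) := by
    apply integral_congr_ae
    exact Filter.Eventually.of_forall fun x => by ring
  rw [hre, integral_add (hsqd.const_mul _) hg, integral_const_mul]
  linarith
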